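/- Under the linear model with deterministic design X, for any h > 0 and any l ∈ ℝᵖ with ‖l‖ = 1, the mean squared error of the ridge regression estimator satisfies E(lᵀθ̂ − lᵀθ)² ≤ σ²/h + (h/(λ₁ + h))²‖θ‖², where λ₁ is the smallest positive eigenvalue of XᵀX. -/

import Mathlib

open Matrix MeasureTheory ProbabilityTheory

lemma dot_self_nonneg {p : ℕ} (v : Fin p → ℝ) : 0 ≤ v ⬝ᵥ v :=
  Finset.sum_nonneg fun i _ => mul_self_nonneg _

lemma dot_tXX {n p : ℕ} (X : Matrix (Fin n) (Fin p) ℝ) (a b : Fin p → ℝ) :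
    a ⬝ᵥ ((Xᵀ * X) *ᵥ b) = (X *ᵥ a) ⬝ᵥ (X *ᵥ b) := by
  rw [← Matrix.mulVec_mulVec, Matrix.dotProduct_mulVec, Matrix.vecMul_transpose]

set_option maxHeartbeats 1000000 in
lemma eigen_lower_bound {n p : ℕ} (X : Matrix (Fin n) (Fin p) ℝ)
    (lam1 : ℝ)
    (hlam_min : ∀ lam : ℝ, 0 < lam →
      Module.End.HasEigenvalue (Xᵀ * X).mulVecLin lam → lam1 ≤ lam)
    (u : Fin p → ℝ) (v : Fin n → ℝ) (hu : u = Xᵀ *ᵥ v) :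
    lam1 * (u ⬝ᵥ u) ≤ u ⬝ᵥ ((Xᵀ * X) *ᵥ u) := by
  classical
  by_cases hu0 : u = 0
  · simp [hu0]
  set E := EuclideanSpace ℝ (Fin p) with hE
  set T : E →ₗ[ℝ] E := Matrix.toEuclideanLin (Xᵀ * X) with hT
  have herm : (Xᵀ * X).IsHermitian := by simpa using Matrix.isHermitian_conjTranspose_mul_self X
  have hsym : T.IsSymmetric := (Matrix.isHermitian_iff_isSymmetric).mp herm
  set V : Submodule ℝ E := LinearMap.range (Matrix.toEuclideanLin Xᵀ) with hV
  have comp1 : ∀ (N : Matrix (Fin n) (Fin n) ℝ) (x : EuclideanSpace ℝ (Fin n)),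
      Matrix.toEuclideanLin Xᵀ (Matrix.toEuclideanLin N x)
        = Matrix.toEuclideanLin (Xᵀ * N) x := by
    intro N x
    apply (WithLp.equiv 2 (Fin p → ℝ)).injective
    show Xᵀ *ᵥ (N *ᵥ _) = (Xᵀ * N) *ᵥ _
    rw [Matrix.mulVec_mulVec]
  have comp2 : ∀ (x : EuclideanSpace ℝ (Fin n)),
      T (Matrix.toEuclideanLin Xᵀ x) = Matrix.toEuclideanLin ((Xᵀ * X) * Xᵀ) x := by
    intro x
    apply (WithLp.equiv 2 (Fin p → ℝ)).injective
    show (Xᵀ * X) *ᵥ (Xᵀ *ᵥ _) = ((Xᵀ * X) * Xᵀ) *ᵥ _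
    rw [Matrix.mulVec_mulVec]
  have hTV : ∀ x ∈ V, T x ∈ V := by
    rintro x ⟨w, rfl⟩
    refine ⟨Matrix.toEuclideanLin (X * Xᵀ) w, ?_⟩
    rw [comp1, comp2, Matrix.mul_assoc]
  have hinner : ∀ x y : E, (inner ℝ x y : ℝ) =
      (WithLp.equiv 2 (Fin p → ℝ) x) ⬝ᵥ (WithLp.equiv 2 (Fin p → ℝ) y) := by
    intro x y
    simp only [PiLp.inner_apply, RCLike.inner_apply, conj_trivial, dotProduct]
    exact Finset.sum_congr rfl fun i _ => mul_comm _ _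
  have hTapp : ∀ x : E, (WithLp.equiv 2 (Fin p → ℝ)) (T x)
      = (Xᵀ * X) *ᵥ (WithLp.equiv 2 (Fin p → ℝ) x) := fun x => rfl
  have hTinner : ∀ x : E, (inner ℝ (T x) x : ℝ)
      = (X *ᵥ (WithLp.equiv 2 (Fin p → ℝ) x)) ⬝ᵥ (X *ᵥ (WithLp.equiv 2 (Fin p → ℝ) x)) := by
    intro x
    rw [hinner, hTapp, dotProduct_comm, dot_tXX]
  have hpos : ∀ x : E, 0 ≤ (inner ℝ (T x) x : ℝ) := fun x => (hTinner x) ▸ dot_self_nonneg _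
  set S : V →ₗ[ℝ] V := T.restrict hTV with hS
  have hSsym : S.IsSymmetric := hsym.restrict_invariant hTV
  set uE : E := (WithLp.equiv 2 (Fin p → ℝ)).symm u with huE
  have huEV : uE ∈ V := by
    refine ⟨(WithLp.equiv 2 (Fin n → ℝ)).symm v, ?_⟩
    apply (WithLp.equiv 2 (Fin p → ℝ)).injective
    show Xᵀ *ᵥ v = _
    rw [huE, Equiv.apply_symm_apply, hu]
  have huE0 : uE ≠ 0 := by
    simp only [huE, ne_eq]
    intro hcon
    exact hu0 (by simpa using congrArg (WithLp.equiv 2 (Fin p → ℝ)) hcon)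
  haveI : Nontrivial V :=
    ⟨⟨uE, huEV⟩, 0, fun hcon => huE0 (by simpa using congrArg Subtype.val hcon)⟩
  have heig := hSsym.hasEigenvalue_iInf_of_finiteDimensional
  set lam : ℝ := ⨅ x : {x : V // x ≠ 0}, RCLike.re (inner ℝ (S x) (x : V) : ℝ) / ‖(x : V)‖ ^ 2
    with hlam
  obtain ⟨w0, hw0⟩ := Module.End.HasEigenvalue.exists_hasEigenvector (by exact_mod_cast heig)
  have hw0ne : (w0 : E) ≠ 0 := by
    simpa [Submodule.coe_eq_zero] using hw0.2
  have hSw0 : S w0 = lam • w0 := by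
    have := Module.End.mem_eigenspace_iff.mp hw0.1
    exact_mod_cast this
  have hTw0 : T (w0 : E) = lam • (w0 : E) := by
    have : ((S w0 : V) : E) = ((lam • w0 : V) : E) := congrArg _ hSw0
    simpa [hS, LinearMap.restrict_apply] using this
  -- eigenvector for mulVecLin
  set u0 : Fin p → ℝ := (WithLp.equiv 2 (Fin p → ℝ)) (w0 : E) with hu0def
  have hu0ne : u0 ≠ 0 := fun hcon => hw0ne ((WithLp.equiv 2 (Fin p → ℝ)).injective (by simpa [hu0def] using hcon))
  have hmv : (Xᵀ * X) *ᵥ u0 = lam • u0 := by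
    have := congrArg (WithLp.equiv 2 (Fin p → ℝ)) hTw0
    rw [hTapp] at this
    exact this
  have heigmul : Module.End.HasEigenvalue (Xᵀ * X).mulVecLin lam :=
    Module.End.hasEigenvalue_of_hasEigenvector
      ⟨Module.End.mem_eigenspace_iff.mpr (by rw [Matrix.mulVecLin_apply]; exact hmv), hu0ne⟩
  -- u0 is in the row space (pi version)
  obtain ⟨z, hz⟩ := w0.2
  have hu0row : u0 = Xᵀ *ᵥ (WithLp.equiv 2 (Fin n → ℝ) z) := by
    rw [hu0def, ← hz]
    rfl
  -- lam is positive
  have hXu0 : X *ᵥ u0 ≠ 0 := by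
    intro hcon
    apply hu0ne
    have h1 : u0 ⬝ᵥ u0 = 0 := by
      nth_rewrite 2 [hu0row]
      rw [Matrix.dotProduct_mulVec, Matrix.vecMul_transpose, hcon, zero_dotProduct]
    exact dotProduct_self_eq_zero.mp h1
  have hq_pos : 0 < (X *ᵥ u0) ⬝ᵥ (X *ᵥ u0) :=
    lt_of_le_of_ne (dot_self_nonneg _) (fun hcon => hXu0 (dotProduct_self_eq_zero.mp hcon.symm))
  have hu0_pos : 0 < u0 ⬝ᵥ u0 :=
    lt_of_le_of_ne (dot_self_nonneg _) (fun hcon => hu0ne (dotProduct_self_eq_zero.mp hcon.symm))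
  have hlam_eq : lam * (u0 ⬝ᵥ u0) = (X *ᵥ u0) ⬝ᵥ (X *ᵥ u0) := by
    have h1 := hTinner (w0 : E)
    rw [hTw0, hinner] at h1
    have h2 : (WithLp.equiv 2 (Fin p → ℝ)) (lam • (w0 : E)) = lam • u0 := rfl
    rw [h2] at h1
    simpa [hu0def, smul_dotProduct, smul_eq_mul] using h1
  have hlam_pos' : 0 < lam := by
    nlinarith [hq_pos, hu0_pos, hlam_eq]
  have hlam1_le : lam1 ≤ lam := hlam_min lam hlam_pos' heigmul
  -- lam ≤ Rayleigh quotient of uE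
  have hbdd : BddBelow (Set.range fun x : {x : V // x ≠ 0} =>
      RCLike.re (inner ℝ (S (x : V)) ((x : V) : V) : ℝ) / ‖((x : V) : V)‖ ^ 2) := by
    refine ⟨0, fun y hy => ?_⟩
    obtain ⟨x, rfl⟩ := hy
    have : (inner ℝ (S (x : V)) ((x : V) : V) : ℝ) = inner ℝ (T ((x : V) : E)) ((x : V) : E) := by
      simp [hS, LinearMap.restrict_apply, Submodule.coe_inner]
    refine div_nonneg ?_ (by positivity)
    simpa [this] using hpos ((x : V) : E)
  have hray : lam ≤ RCLike.re (inner ℝ (S ⟨uE, huEV⟩) (⟨uE, huEV⟩ : V) : ℝ) / ‖(⟨uE, huEV⟩ : V)‖ ^ 2 := by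
    rw [hlam]
    exact ciInf_le hbdd ⟨⟨uE, huEV⟩, fun hcon => huE0 (by simpa using congrArg Subtype.val hcon)⟩
  have hu_pos : 0 < u ⬝ᵥ u :=
    lt_of_le_of_ne (dot_self_nonneg _) (fun hcon => hu0 (dotProduct_self_eq_zero.mp hcon.symm))
  have hnum : (inner ℝ (S ⟨uE, huEV⟩) ((⟨uE, huEV⟩ : V) : V) : ℝ) = (X *ᵥ u) ⬝ᵥ (X *ᵥ u) := by
    have h1 : (inner ℝ (S ⟨uE, huEV⟩) ((⟨uE, huEV⟩ : V) : V) : ℝ) = inner ℝ (T uE) uE := by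
      simp [hS, LinearMap.restrict_apply, Submodule.coe_inner]
    rw [h1, hTinner]
    congr 2 <;> · rw [huE]; exact congrArg _ (Equiv.apply_symm_apply _ _)
  have hden : ‖uE‖ ^ 2 = u ⬝ᵥ u := by
    rw [← real_inner_self_eq_norm_sq, hinner]
    congr 1 <;> · rw [huE]; exact Equiv.apply_symm_apply _ _
  have hray2 : lam ≤ ((X *ᵥ u) ⬝ᵥ (X *ᵥ u)) / (u ⬝ᵥ u) := by
    simpa [hnum, hden] using hray
  have hfinal : lam * (u ⬝ᵥ u) ≤ (X *ᵥ u) ⬝ᵥ (X *ᵥ u) :=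
    (le_div_iff₀ hu_pos).mp hray2
  rw [dot_tXX]
  calc lam1 * (u ⬝ᵥ u) ≤ lam * (u ⬝ᵥ u) := by nlinarith [hu_pos]
    _ ≤ (X *ᵥ u) ⬝ᵥ (X *ᵥ u) := hfinal

lemma smul_one_posDef {p : ℕ} {h : ℝ} (hh : 0 < h) :
    (h • (1 : Matrix (Fin p) (Fin p) ℝ)).PosDef := by
  exact Matrix.PosDef.one.smul hh

lemma ridge_posDef {n p : ℕ} (X : Matrix (Fin n) (Fin p) ℝ) {h : ℝ} (hh : 0 < h) :
    (Xᵀ * X + h • (1 : Matrix (Fin p) (Fin p) ℝ)).PosDef := by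
  refine Matrix.PosDef.posSemidef_add ?_ (smul_one_posDef hh)
  simpa using Matrix.posSemidef_conjTranspose_mul_self X

lemma ridge_det_unit {n p : ℕ} (X : Matrix (Fin n) (Fin p) ℝ) {h : ℝ} (hh : 0 < h) :
    IsUnit (Xᵀ * X + h • (1 : Matrix (Fin p) (Fin p) ℝ)).det :=
  isUnit_iff_ne_zero.mpr (ne_of_gt (ridge_posDef X hh).det_pos)

lemma var_bound {n p : ℕ} (X : Matrix (Fin n) (Fin p) ℝ) {h : ℝ} (hh : 0 < h)
    (l : Fin p → ℝ) (hl : ∑ j, l j ^ 2 = 1) :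
    (X *ᵥ ((Xᵀ * X + h • 1)⁻¹ *ᵥ l)) ⬝ᵥ (X *ᵥ ((Xᵀ * X + h • 1)⁻¹ *ᵥ l)) ≤ 1 / h := by
  set A : Matrix (Fin p) (Fin p) ℝ := Xᵀ * X + h • 1 with hA
  set w : Fin p → ℝ := A⁻¹ *ᵥ l with hw
  have hAw : A *ᵥ w = l := by
    rw [hw, Matrix.mulVec_mulVec, Matrix.mul_nonsing_inv _ (ridge_det_unit X hh),
      Matrix.one_mulVec]
  have hkey : w ⬝ᵥ (A *ᵥ w) = w ⬝ᵥ ((Xᵀ * X) *ᵥ w) + h * (w ⬝ᵥ w) := by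
    rw [hA, Matrix.add_mulVec, dotProduct_add, Matrix.smul_mulVec,
      Matrix.one_mulVec, dotProduct_smul, smul_eq_mul]
  rw [hAw] at hkey
  have hsc : (X *ᵥ w) ⬝ᵥ (X *ᵥ w) = w ⬝ᵥ ((Xᵀ * X) *ᵥ w) := (dot_tXX X w w).symm
  have hCS : (w ⬝ᵥ l) ^ 2 ≤ (w ⬝ᵥ w) * 1 := by
    have := Finset.sum_mul_sq_le_sq_mul_sq Finset.univ w l
    have e1 : w ⬝ᵥ l = ∑ j, w j * l j := rfl
    have e2 : w ⬝ᵥ w = ∑ j, w j ^ 2 := by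
      simp [dotProduct, sq]
    rw [e1, e2, ← hl]
    exact this
  have hsc0 : 0 ≤ (X *ᵥ w) ⬝ᵥ (X *ᵥ w) := dot_self_nonneg _
  have hsw0 : 0 ≤ w ⬝ᵥ w := dot_self_nonneg _
  rw [hsc]
  rw [hsc] at hsc0
  set sc := w ⬝ᵥ ((Xᵀ * X) *ᵥ w)
  set sw := w ⬝ᵥ w
  set d := w ⬝ᵥ l
  rw [mul_one] at hCS
  -- d = sc + h * sw, d^2 ≤ sw, sc ≥ 0, sw ≥ 0 ⇒ sc ≤ 1/h
  have hd0 : 0 ≤ d := by nlinarith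
  have h4 : h * d ≤ 1 := by nlinarith [sq_nonneg (h * d - 1), mul_pos hh hh]
  rw [le_div_iff₀ hh]
  have hscd : sc ≤ d := by nlinarith
  have := mul_le_mul_of_nonneg_left hscd hh.le
  nlinarith

lemma bias_bound {n p : ℕ} (X : Matrix (Fin n) (Fin p) ℝ)
    (lam1 : ℝ)
    (hlam_min : ∀ lam : ℝ, 0 < lam →
      Module.End.HasEigenvalue (Xᵀ * X).mulVecLin lam → lam1 ≤ lam)
    (hlk : 0 < lam1) {h : ℝ} (hh : 0 < h)
    (θ : Fin p → ℝ) (v : Fin n → ℝ) (hθ : θ = Xᵀ *ᵥ v)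
    (l : Fin p → ℝ) (hl : ∑ j, l j ^ 2 = 1) :
    (l ⬝ᵥ ((Xᵀ * X + h • 1)⁻¹ *ᵥ θ)) ^ 2 ≤ (1 / (lam1 + h)) ^ 2 * (θ ⬝ᵥ θ) := by
  classical
  set A : Matrix (Fin p) (Fin p) ℝ := Xᵀ * X + h • 1 with hA
  set R : Submodule ℝ (Fin p → ℝ) := LinearMap.range (Xᵀ).mulVecLin with hR
  have hθR : θ ∈ R := ⟨v, by rw [Matrix.mulVecLin_apply]; exact hθ.symm⟩
  have hAR : ∀ x ∈ R, A.mulVecLin x ∈ R := by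
    rintro x ⟨z, rfl⟩
    refine ⟨X *ᵥ (Xᵀ *ᵥ z) + h • z, ?_⟩
    simp only [Matrix.mulVecLin_apply, hA, Matrix.add_mulVec, Matrix.mulVec_mulVec,
      Matrix.smul_mulVec, Matrix.one_mulVec, Matrix.mulVec_add, Matrix.mulVec_smul,
      Matrix.mul_assoc, Matrix.add_mul, Matrix.smul_mul, Matrix.one_mul]
  have hinj : Function.Injective (A.mulVecLin) := by
    intro a b hab
    simp only [Matrix.mulVecLin_apply] at hab
    have := congrArg (fun y => A⁻¹ *ᵥ y) hab
    simpa [Matrix.mulVec_mulVec, Matrix.nonsing_inv_mul A (ridge_det_unit X hh),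
      Matrix.one_mulVec] using this
  set f : R →ₗ[ℝ] R := (A.mulVecLin).restrict hAR with hf
  have hfinj : Function.Injective f := by
    intro a b hab
    exact Subtype.ext (hinj (by
      have := congrArg (Subtype.val) hab
      simpa [hf, LinearMap.restrict_apply] using this))
  have hfsurj : Function.Surjective f := (LinearMap.injective_iff_surjective).mp hfinj
  obtain ⟨⟨w, hwmem⟩, hwR⟩ := hfsurj ⟨θ, hθR⟩
  have hAw : A *ᵥ w = θ := by
    have := congrArg (Subtype.val) hwR
    simpa [hf, LinearMap.restrict_apply, Matrix.mulVecLin_apply] using this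
  have hinvθ : A⁻¹ *ᵥ θ = w := by
    rw [← hAw, Matrix.mulVec_mulVec, Matrix.nonsing_inv_mul _ (ridge_det_unit X hh),
      Matrix.one_mulVec]
  obtain ⟨z, hz⟩ := hwmem
  have heigen : lam1 * (w ⬝ᵥ w) ≤ w ⬝ᵥ ((Xᵀ * X) *ᵥ w) :=
    eigen_lower_bound X lam1 hlam_min w z (by rw [← hz]; rfl)
  have hkey : w ⬝ᵥ θ = w ⬝ᵥ ((Xᵀ * X) *ᵥ w) + h * (w ⬝ᵥ w) := by
    rw [← hAw, hA, Matrix.add_mulVec, dotProduct_add, Matrix.smul_mulVec,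
      Matrix.one_mulVec, dotProduct_smul, smul_eq_mul]
  have hCS1 : (w ⬝ᵥ θ) ^ 2 ≤ (w ⬝ᵥ w) * (θ ⬝ᵥ θ) := by
    have := Finset.sum_mul_sq_le_sq_mul_sq Finset.univ w θ
    have e1 : w ⬝ᵥ θ = ∑ j, w j * θ j := rfl
    have e2 : w ⬝ᵥ w = ∑ j, w j ^ 2 := by simp [dotProduct, sq]
    have e3 : θ ⬝ᵥ θ = ∑ j, θ j ^ 2 := by simp [dotProduct, sq]
    rw [e1, e2, e3]
    exact this
  have hCS2 : (l ⬝ᵥ w) ^ 2 ≤ w ⬝ᵥ w := by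
    have := Finset.sum_mul_sq_le_sq_mul_sq Finset.univ l w
    have e1 : l ⬝ᵥ w = ∑ j, l j * w j := rfl
    have e2 : w ⬝ᵥ w = ∑ j, w j ^ 2 := by simp [dotProduct, sq]
    rw [e1, e2]
    calc (∑ j, l j * w j) ^ 2 ≤ (∑ j, l j ^ 2) * ∑ j, w j ^ 2 := this
      _ = ∑ j, w j ^ 2 := by rw [hl, one_mul]
  rw [hinvθ]
  have hsw0 : 0 ≤ w ⬝ᵥ w := dot_self_nonneg _
  have hsθ0 : 0 ≤ θ ⬝ᵥ θ := dot_self_nonneg _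
  have hk : 0 < lam1 + h := by linarith
  have hd : (lam1 + h) * (w ⬝ᵥ w) ≤ w ⬝ᵥ θ := by nlinarith
  have hswb : (lam1 + h) ^ 2 * (w ⬝ᵥ w) ≤ θ ⬝ᵥ θ := by
    rcases eq_or_lt_of_le hsw0 with hsw | hsw
    · nlinarith
    · nlinarith [mul_self_le_mul_self (mul_nonneg hk.le hsw0) hd, hCS1]
  have h1 : (l ⬝ᵥ w) ^ 2 ≤ (θ ⬝ᵥ θ) / (lam1 + h) ^ 2 := by
    rw [le_div_iff₀ (by positivity)]
    nlinarith [mul_le_mul_of_nonneg_right hCS2 (sq_nonneg (lam1 + h)), hswb]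
  calc (l ⬝ᵥ w) ^ 2 ≤ (θ ⬝ᵥ θ) / (lam1 + h) ^ 2 := h1
    _ = (1 / (lam1 + h)) ^ 2 * (θ ⬝ᵥ θ) := by
        rw [one_div, inv_pow, div_eq_mul_inv, mul_comm]

lemma expect_sq {n : ℕ} {Ω : Type*} [MeasurableSpace Ω] (μ : Measure Ω) [IsProbabilityMeasure μ]
    (σ : ℝ) (ε : Ω → Fin n → ℝ)
    (hmeas : ∀ i, Measurable fun ω => ε ω i)
    (hL2 : ∀ i, MemLp (fun ω => ε ω i) 2 μ)
    (hmean : ∀ i, ∫ ω, ε ω i ∂μ = 0)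
    (hvar : ∀ i, ∫ ω, (ε ω i) ^ 2 ∂μ = σ ^ 2)
    (hindep : iIndepFun (fun i ω => ε ω i) μ)
    (c : Fin n → ℝ) (b : ℝ) :
    ∫ ω, (c ⬝ᵥ ε ω + b) ^ 2 ∂μ = (c ⬝ᵥ c) * σ ^ 2 + b ^ 2 := by
  classical
  have hInt : ∀ i, Integrable (fun ω => ε ω i) μ := fun i => (hL2 i).integrable one_le_two
  have hIntc : ∀ i, Integrable (fun ω => c i * ε ω i) μ := fun i => (hInt i).const_mul _
  have hprod : ∀ i j, Integrable (fun ω => ε ω i * ε ω j) μ := by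
    intro i j
    have hm : MemLp (fun ω => ε ω i * ε ω j) 1 μ := by
      have := (hL2 j).smul (hL2 i) (p := 2) (q := 2) (r := 1)
      simpa [smul_eq_mul, Pi.mul_def] using this
    exact hm.integrable le_rfl
  have hprodc : ∀ i j, Integrable (fun ω => (c i * c j) * (ε ω i * ε ω j)) μ :=
    fun i j => (hprod i j).const_mul _
  have hoff : ∀ i j, i ≠ j → ∫ ω, ε ω i * ε ω j ∂μ = 0 := by
    intro i j hij
    have hind : IndepFun (fun ω => ε ω i) (fun ω => ε ω j) μ := hindep.indepFun hij
    rw [hind.integral_fun_mul_eq_mul_integral (hmeas i).aestronglyMeasurable (hmeas j).aestronglyMeasurable,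
      hmean i, hmean j, mul_zero]
  have hSmem : MemLp (fun ω => c ⬝ᵥ ε ω) 2 μ := by
    have := memLp_finsetSum (μ := μ) (f := fun i (ω : Ω) => c i * ε ω i) Finset.univ
      (fun i _ => (hL2 i).const_mul (c i))
    simpa [dotProduct] using this
  have hSint : Integrable (fun ω => c ⬝ᵥ ε ω) μ := hSmem.integrable one_le_two
  have hS2int : Integrable (fun ω => (c ⬝ᵥ ε ω) ^ 2) μ := hSmem.integrable_sq
  have hSmean : ∫ ω, c ⬝ᵥ ε ω ∂μ = 0 := by
    have h1 : ∫ ω, c ⬝ᵥ ε ω ∂μ = ∑ i, ∫ ω, c i * ε ω i ∂μ := by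
      rw [← integral_finset_sum Finset.univ (fun i _ => hIntc i)]
      rfl
    rw [h1]
    simp [integral_const_mul, hmean]
  have hS2 : ∫ ω, (c ⬝ᵥ ε ω) ^ 2 ∂μ = (c ⬝ᵥ c) * σ ^ 2 := by
    have h1 : ∀ ω, (c ⬝ᵥ ε ω) ^ 2 = ∑ i, ∑ j, (c i * c j) * (ε ω i * ε ω j) := by
      intro ω
      rw [sq]
      show (∑ i, c i * ε ω i) * (∑ j, c j * ε ω j) = _
      rw [Finset.sum_mul_sum]
      exact Finset.sum_congr rfl fun i _ => Finset.sum_congr rfl fun j _ => by ring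
    calc ∫ ω, (c ⬝ᵥ ε ω) ^ 2 ∂μ
        = ∫ ω, ∑ i, ∑ j, (c i * c j) * (ε ω i * ε ω j) ∂μ := by
          exact integral_congr_ae (Filter.Eventually.of_forall fun ω => h1 ω)
      _ = ∑ i, ∑ j, ∫ ω, (c i * c j) * (ε ω i * ε ω j) ∂μ := by
          rw [integral_finset_sum Finset.univ
            (fun i _ => integrable_finset_sum Finset.univ (fun j _ => hprodc i j))]
          exact Finset.sum_congr rfl fun i _ =>
            integral_finset_sum Finset.univ (fun j _ => hprodc i j)
      _ = ∑ i, c i * c i * σ ^ 2 := by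
          refine Finset.sum_congr rfl fun i _ => ?_
          rw [Finset.sum_eq_single i]
          · rw [integral_const_mul]
            have : ∫ ω, ε ω i * ε ω i ∂μ = σ ^ 2 := by
              rw [← hvar i]
              exact integral_congr_ae (Filter.Eventually.of_forall fun ω => (sq (ε ω i)).symm)
            rw [this]
          · intro j _ hji
            rw [integral_const_mul, hoff i j (Ne.symm hji), mul_zero]
          · intro hcon
            exact absurd (Finset.mem_univ i) hcon
      _ = (c ⬝ᵥ c) * σ ^ 2 := by rw [dotProduct, Finset.sum_mul]
  have hexp : ∀ ω, (c ⬝ᵥ ε ω + b) ^ 2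
      = (c ⬝ᵥ ε ω) ^ 2 + (2 * b) * (c ⬝ᵥ ε ω) + b ^ 2 := fun ω => by ring
  calc ∫ ω, (c ⬝ᵥ ε ω + b) ^ 2 ∂μ
      = ∫ ω, ((c ⬝ᵥ ε ω) ^ 2 + (2 * b) * (c ⬝ᵥ ε ω) + b ^ 2) ∂μ :=
        integral_congr_ae (Filter.Eventually.of_forall fun ω => hexp ω)
    _ = (∫ ω, ((c ⬝ᵥ ε ω) ^ 2 + (2 * b) * (c ⬝ᵥ ε ω)) ∂μ) + ∫ _, b ^ 2 ∂μ :=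
        integral_add (hS2int.add (hSint.const_mul _)) (integrable_const _)
    _ = (∫ ω, (c ⬝ᵥ ε ω) ^ 2 ∂μ) + (∫ ω, (2 * b) * (c ⬝ᵥ ε ω) ∂μ) + ∫ _, b ^ 2 ∂μ := by
        rw [integral_add hS2int (hSint.const_mul _)]
    _ = (c ⬝ᵥ c) * σ ^ 2 + b ^ 2 := by
        rw [hS2, integral_const_mul, hSmean, mul_zero, add_zero, integral_const]
        simp

/-- Under the linear model `y = Xβ + ε` with deterministic design `X`, where `ε` has
independent components of mean `0` and variance `σ²` and `θ` is the projection of `β`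
onto the row space of `X`, for any `h > 0` and any `l ∈ ℝᵖ` with `‖l‖ = 1`, the mean
squared error of the ridge regression estimator `θ̂ = (XᵀX + hI_p)⁻¹ Xᵀ y` satisfies
`E(lᵀθ̂ − lᵀθ)² ≤ σ²/h + (h/(λ₁+h))² ‖θ‖²`, where `λ₁` is the smallest positive
eigenvalue of `XᵀX`. -/
theorem ridge_linear_combination_mse_bound
    {n p : ℕ} {Ω : Type*} [MeasurableSpace Ω] (μ : Measure Ω) [IsProbabilityMeasure μ]
    (X : Matrix (Fin n) (Fin p) ℝ)
    (β θ : Fin p → ℝ)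
    (hθmem : ∃ v : Fin n → ℝ, θ = Xᵀ *ᵥ v) (hθproj : X *ᵥ θ = X *ᵥ β)
    (σ : ℝ) (ε : Ω → Fin n → ℝ)
    (hmeas : ∀ i, Measurable fun ω => ε ω i)
    (hL2 : ∀ i, MemLp (fun ω => ε ω i) 2 μ)
    (hmean : ∀ i, ∫ ω, ε ω i ∂μ = 0)
    (hvar : ∀ i, ∫ ω, (ε ω i) ^ 2 ∂μ = σ ^ 2)
    (hindep : iIndepFun (fun i ω => ε ω i) μ)
    (lam1 : ℝ) (hlam_pos : 0 < lam1)
    (hlam_eig : Module.End.HasEigenvalue (Xᵀ * X).mulVecLin lam1)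
    (hlam_min : ∀ lam : ℝ, 0 < lam →
      Module.End.HasEigenvalue (Xᵀ * X).mulVecLin lam → lam1 ≤ lam)
    (h : ℝ) (hh : 0 < h)
    (l : Fin p → ℝ) (hl : ∑ j, l j ^ 2 = 1) :
    ∫ ω, (∑ j, l j * ((Xᵀ * X + h • 1)⁻¹ *ᵥ (Xᵀ *ᵥ (X *ᵥ β + ε ω))) j
          - ∑ j, l j * θ j) ^ 2 ∂μ
      ≤ σ ^ 2 / h + (h / (lam1 + h)) ^ 2 * ∑ j, θ j ^ 2 := by
  classical
  obtain ⟨v, hv⟩ := hθmem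
  set A : Matrix (Fin p) (Fin p) ℝ := Xᵀ * X + h • 1 with hA
  set c : Fin n → ℝ := X *ᵥ (A⁻¹ *ᵥ l) with hc
  set b : ℝ := -(h * (l ⬝ᵥ (A⁻¹ *ᵥ θ))) with hb
  have hAinvA : ∀ x : Fin p → ℝ, A⁻¹ *ᵥ (A *ᵥ x) = x := by
    intro x
    rw [Matrix.mulVec_mulVec, Matrix.nonsing_inv_mul _ (ridge_det_unit X hh),
      Matrix.one_mulVec]
  have hAinvsym : (A⁻¹)ᵀ = A⁻¹ := by
    rw [Matrix.transpose_nonsing_inv]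
    congr 1
    rw [hA, Matrix.transpose_add, Matrix.transpose_mul, Matrix.transpose_transpose,
      Matrix.transpose_smul, Matrix.transpose_one]
  have hswap : ∀ u : Fin p → ℝ, l ⬝ᵥ (A⁻¹ *ᵥ u) = (A⁻¹ *ᵥ l) ⬝ᵥ u := by
    intro u
    rw [Matrix.dotProduct_mulVec]
    congr 1
    rw [← Matrix.mulVec_transpose, hAinvsym]
  have hmain : ∀ e : Fin n → ℝ,
      l ⬝ᵥ (A⁻¹ *ᵥ (Xᵀ *ᵥ (X *ᵥ β + e))) - l ⬝ᵥ θ = c ⬝ᵥ e + b := by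
    intro e
    have h1 : Xᵀ *ᵥ (X *ᵥ β + e) = (A *ᵥ θ - h • θ) + Xᵀ *ᵥ e := by
      rw [Matrix.mulVec_add, ← hθproj, Matrix.mulVec_mulVec]
      congr 1
      rw [hA, Matrix.add_mulVec, Matrix.smul_mulVec, Matrix.one_mulVec]
      abel
    have h2 : A⁻¹ *ᵥ (Xᵀ *ᵥ (X *ᵥ β + e))
        = (θ - h • (A⁻¹ *ᵥ θ)) + A⁻¹ *ᵥ (Xᵀ *ᵥ e) := by
      rw [h1, Matrix.mulVec_add, Matrix.mulVec_sub, Matrix.mulVec_smul, hAinvA]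
    have h3 : l ⬝ᵥ (A⁻¹ *ᵥ (Xᵀ *ᵥ e)) = c ⬝ᵥ e := by
      rw [hswap, hc, Matrix.dotProduct_mulVec]
      congr 1
      rw [← Matrix.mulVec_transpose, Matrix.transpose_transpose]
    rw [h2, dotProduct_add, dotProduct_sub, dotProduct_smul, h3,
      hb, smul_eq_mul]
    ring
  have hrw : (∫ ω, (∑ j, l j * ((Xᵀ * X + h • 1)⁻¹ *ᵥ (Xᵀ *ᵥ (X *ᵥ β + ε ω))) j
          - ∑ j, l j * θ j) ^ 2 ∂μ) = ∫ ω, (c ⬝ᵥ ε ω + b) ^ 2 ∂μ := by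
    refine integral_congr_ae (Filter.Eventually.of_forall fun ω => ?_)
    show (l ⬝ᵥ (A⁻¹ *ᵥ (Xᵀ *ᵥ (X *ᵥ β + ε ω))) - l ⬝ᵥ θ) ^ 2 = (c ⬝ᵥ ε ω + b) ^ 2
    rw [hmain (ε ω)]
  rw [hrw, expect_sq μ σ ε hmeas hL2 hmean hvar hindep c b]
  have hvarb : (c ⬝ᵥ c) * σ ^ 2 ≤ σ ^ 2 / h := by
    have h1 : c ⬝ᵥ c ≤ 1 / h := var_bound X hh l hl
    have h2 : (0:ℝ) ≤ σ ^ 2 := sq_nonneg σ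
    calc (c ⬝ᵥ c) * σ ^ 2 ≤ (1 / h) * σ ^ 2 := mul_le_mul_of_nonneg_right h1 h2
      _ = σ ^ 2 / h := by ring
  have hbiasb : b ^ 2 ≤ (h / (lam1 + h)) ^ 2 * ∑ j, θ j ^ 2 := by
    have h1 : (l ⬝ᵥ (A⁻¹ *ᵥ θ)) ^ 2 ≤ (1 / (lam1 + h)) ^ 2 * (θ ⬝ᵥ θ) :=
      bias_bound X lam1 hlam_min hlam_pos hh θ v hv l hl
    have h2 : θ ⬝ᵥ θ = ∑ j, θ j ^ 2 := by simp [dotProduct, sq]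
    have h3 : b ^ 2 = h ^ 2 * (l ⬝ᵥ (A⁻¹ *ᵥ θ)) ^ 2 := by rw [hb]; ring
    rw [h3, ← h2]
    calc h ^ 2 * (l ⬝ᵥ (A⁻¹ *ᵥ θ)) ^ 2
        ≤ h ^ 2 * ((1 / (lam1 + h)) ^ 2 * (θ ⬝ᵥ θ)) :=
          mul_le_mul_of_nonneg_left h1 (sq_nonneg h)
      _ = (h / (lam1 + h)) ^ 2 * (θ ⬝ᵥ θ) := by ring
  linarith
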